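/- The polycyclic monoid Pₙ is congruence-free if and only if n > 1. -/

import Mathlib

universe u

/-- A directed graph: vertices, edges, source and range maps. -/
structure DGraph : Type (u + 1) where
  V : Type u
  Ed : Type u
  src : Ed → V
  rng : Ed → V

/-- The end vertex of a list of edges started at `v` (ignoring composability). -/
def DGraph.ranAux (G : DGraph) : G.V → List G.Ed → G.V
  | v, [] => v
  | _, e :: es => DGraph.ranAux G (G.rng e) es

/-- The edges `l` form a composable path starting at `v`. -/
def DGraph.Chain (G : DGraph) : G.V → List G.Ed → Prop
  | _, [] => True
  | v, e :: es => G.src e = v ∧ DGraph.Chain G (G.rng e) es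

theorem DGraph.ranAux_append (G : DGraph) (v : G.V) (l1 l2 : List G.Ed) :
    G.ranAux v (l1 ++ l2) = G.ranAux (G.ranAux v l1) l2 := by
  induction l1 generalizing v with
  | nil => rfl
  | cons e es ih => exact ih (G.rng e)

theorem DGraph.chain_append (G : DGraph) {v : G.V} {l1 l2 : List G.Ed}
    (h1 : G.Chain v l1) (h2 : G.Chain (G.ranAux v l1) l2) : G.Chain v (l1 ++ l2) := by
  induction l1 generalizing v with
  | nil => exact h2
  | cons e es ih => exact ⟨h1.1, ih h1.2 h2⟩

theorem DGraph.chain_append_right (G : DGraph) {v : G.V} {l1 l2 : List G.Ed}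
    (h : G.Chain v (l1 ++ l2)) : G.Chain (G.ranAux v l1) l2 := by
  induction l1 generalizing v with
  | nil => exact h
  | cons e es ih => exact ih h.2

/-- A (finite, directed) path in the graph `G`: a start vertex together
with a composable list of edges. Vertices are the paths of length `0`. -/
structure GPath (G : DGraph.{u}) : Type u where
  start : G.V
  edges : List G.Ed
  chain : G.Chain start edges

namespace GPath

variable {G : DGraph}

/-- The range (end vertex) of a path. -/
def ran (p : GPath G) : G.V := G.ranAux p.start p.edges

/-- The path of length zero at a vertex. -/
def ofVertex (G : DGraph) (v : G.V) : GPath G := ⟨v, [], trivial⟩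

/-- The path of length one given by an edge. -/
def ofEdge (G : DGraph) (e : G.Ed) : GPath G := ⟨G.src e, [e], ⟨rfl, trivial⟩⟩

@[simp] theorem ofVertex_ran (G : DGraph) (v : G.V) : (ofVertex G v).ran = v := rfl

@[simp] theorem ofEdge_ran (G : DGraph) (e : G.Ed) : (ofEdge G e).ran = G.rng e := rfl

/-- Concatenation of composable paths. -/
def append (p q : GPath G) (h : p.ran = q.start) : GPath G :=
  ⟨p.start, p.edges ++ q.edges,
    G.chain_append p.chain (by
      show G.Chain (G.ranAux p.start p.edges) q.edges
      have : G.ranAux p.start p.edges = q.start := h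
      rw [this]; exact q.chain)⟩

@[simp] theorem append_ran (p q : GPath G) (h : p.ran = q.start) :
    (p.append q h).ran = q.ran := by
  show G.ranAux p.start (p.edges ++ q.edges) = q.ran
  rw [G.ranAux_append]
  have : G.ranAux p.start p.edges = q.start := h
  rw [this]; rfl

/-- `y` is an initial segment of the path `p`. -/
def IsPrefixOf (y p : GPath G) : Prop := y.start = p.start ∧ y.edges <+: p.edges

/-- The remainder `t` of `p` after its initial segment `y`, so that `p = y ++ t`. -/
def remainder (y p : GPath G) (h : y.IsPrefixOf p) : GPath G :=
  ⟨y.ran, p.edges.drop y.edges.length, by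
    obtain ⟨l2, hl⟩ := h.2
    rw [← hl, List.drop_left]
    show G.Chain (G.ranAux y.start y.edges) l2
    rw [h.1]
    exact G.chain_append_right (v := p.start) (l1 := y.edges) (l2 := l2)
      (by rw [hl]; exact p.chain)⟩

@[simp] theorem remainder_ran (y p : GPath G) (h : y.IsPrefixOf p) :
    (y.remainder p h).ran = p.ran := by
  obtain ⟨l2, hl⟩ := h.2
  show G.ranAux y.ran (p.edges.drop y.edges.length) = p.ran
  rw [← hl, List.drop_left]
  show G.ranAux (G.ranAux y.start y.edges) l2 = p.ran
  rw [h.1, ← G.ranAux_append, hl]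
  rfl

end GPath

/-- The graph inverse semigroup of `G` (in normal form): its elements are zero together
with the elements `x * y⁻¹` for paths `x`, `y` with the same range. -/
inductive GIS (G : DGraph.{u}) : Type u where
  | zero : GIS G
  | mk (x y : GPath G) (h : x.ran = y.ran) : GIS G

instance (G : DGraph) : Zero (GIS G) := ⟨GIS.zero⟩

open scoped Classical in
/-- Multiplication in the graph inverse semigroup. -/
noncomputable def GIS.gmul {G : DGraph} : GIS G → GIS G → GIS G
  | GIS.zero, _ => GIS.zero
  | GIS.mk _ _ _, GIS.zero => GIS.zero
  | GIS.mk x y hxy, GIS.mk p q hpq =>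
    if h1 : y.IsPrefixOf p then
      GIS.mk (x.append (y.remainder p h1) hxy) q
        ((GPath.append_ran _ _ hxy).trans ((GPath.remainder_ran _ _ _).trans hpq))
    else if h2 : p.IsPrefixOf y then
      GIS.mk x (q.append (p.remainder y h2) hpq.symm)
        (hxy.trans ((GPath.append_ran _ _ hpq.symm).trans (GPath.remainder_ran _ _ _)).symm)
    else GIS.zero

noncomputable instance (G : DGraph) : Mul (GIS G) := ⟨GIS.gmul⟩

/-- The element of `GIS G` corresponding to a vertex `v` (i.e. `v = v * v⁻¹`). -/
def vertexEl (G : DGraph) (v : G.V) : GIS G :=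
  GIS.mk (GPath.ofVertex G v) (GPath.ofVertex G v) rfl

/-- The element of `GIS G` corresponding to an edge `e` (i.e. `e = e * r(e)⁻¹`). -/
def edgeEl (G : DGraph) (e : G.Ed) : GIS G :=
  GIS.mk (GPath.ofEdge G e) (GPath.ofVertex G (G.rng e)) rfl

/-- The inverse operation on `GIS G`: `(x y⁻¹)⁻¹ = y x⁻¹`. -/
def GIS.inv {G : DGraph} : GIS G → GIS G
  | GIS.zero => GIS.zero
  | GIS.mk x y h => GIS.mk y x h.symm

/-- `a` lies in the principal left ideal generated by `b` (`S¹a ⊆ S¹b`). -/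
def GreenLeL {G : DGraph} (a b : GIS G) : Prop := a = b ∨ ∃ c, a = c * b

/-- `a` lies in the principal right ideal generated by `b` (`aS¹ ⊆ bS¹`). -/
def GreenLeR {G : DGraph} (a b : GIS G) : Prop := a = b ∨ ∃ c, a = b * c

/-- `a` lies in the principal two-sided ideal generated by `b` (`S¹aS¹ ⊆ S¹bS¹`). -/
def GreenLeJ {G : DGraph} (a b : GIS G) : Prop :=
  a = b ∨ (∃ c, a = c * b) ∨ (∃ c, a = b * c) ∨ (∃ c d, a = c * b * d)

/-- Green's `L`-relation. -/
def GreenEqL {G : DGraph} (a b : GIS G) : Prop := GreenLeL a b ∧ GreenLeL b a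

/-- Green's `R`-relation. -/
def GreenEqR {G : DGraph} (a b : GIS G) : Prop := GreenLeR a b ∧ GreenLeR b a

/-- Green's `J`-relation. -/
def GreenEqJ {G : DGraph} (a b : GIS G) : Prop := GreenLeJ a b ∧ GreenLeJ b a

/-- There is a (possibly trivial) directed path from `v` to `w` in `G`. -/
def GConnected (G : DGraph) (v w : G.V) : Prop := ∃ t : GPath G, t.start = v ∧ t.ran = w

/-- `I` is a (two-sided) ideal of `GIS G`. -/
def GISIdeal {G : DGraph} (I : Set (GIS G)) : Prop :=
  ∀ a ∈ I, ∀ c : GIS G, a * c ∈ I ∧ c * a ∈ I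

/-- `R` is the Rees congruence of some ideal `I`, i.e. `R = (I × I) ∪ Δ`. -/
def IsReesCon {G : DGraph} (R : Con (GIS G)) : Prop :=
  ∃ I : Set (GIS G), GISIdeal I ∧ ∀ a b : GIS G, R a b ↔ (a ∈ I ∧ b ∈ I) ∨ a = b

/-- The only congruences on `GIS G` are the universal one and the diagonal. -/
def CongFree (G : DGraph) : Prop :=
  ∀ R : Con (GIS G), (∀ a b : GIS G, R a b) ∨ (∀ a b : GIS G, R a b ↔ a = b)

/-- The natural partial order on the inverse semigroup `GIS G`:
`a ≤ b` iff `a = ε * b` for some idempotent `ε`. -/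
def natLe {G : DGraph} (a b : GIS G) : Prop := ∃ ε : GIS G, ε * ε = ε ∧ a = ε * b

/-- The graph obtained from `G` by deleting the vertices in `S` and all
edges incident to them. -/
def DGraph.delete (G : DGraph) (S : Set G.V) : DGraph where
  V := {v : G.V // v ∉ S}
  Ed := {e : G.Ed // G.src e ∉ S ∧ G.rng e ∉ S}
  src e := ⟨G.src e.1, e.2.1⟩
  rng e := ⟨G.rng e.1, e.2.2⟩

/-- The graph with a single vertex and `n` loops; its graph inverse semigroup
is the polycyclic monoid `Pₙ`. -/
def polyGraph (n : ℕ) : DGraph :=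
  ⟨PUnit, Fin n, fun _ => PUnit.unit, fun _ => PUnit.unit⟩

namespace PolyAux

theorem chainAll (n : ℕ) (v : (polyGraph n).V) (l : List (Fin n)) :
    (polyGraph n).Chain v l := by
  induction l generalizing v with
  | nil => trivial
  | cons e es ih => exact ⟨(Subsingleton.elim (α := PUnit) _ _ : _), ih _⟩

/-- The path in `polyGraph n` given by a list of edges. -/
def pth (n : ℕ) (l : List (Fin n)) : GPath (polyGraph n) :=
  ⟨PUnit.unit, l, chainAll n _ l⟩

theorem path_eq {n : ℕ} (p : GPath (polyGraph n)) : p = pth n p.edges := by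
  obtain ⟨s, l, c⟩ := p; cases s; rfl

/-- The element `x y⁻¹` of the polycyclic monoid. -/
def el (n : ℕ) (x y : List (Fin n)) : GIS (polyGraph n) :=
  GIS.mk (pth n x) (pth n y) (Subsingleton.elim (α := PUnit) _ _)

theorem mk_eq {n : ℕ} (x y : GPath (polyGraph n)) (h : x.ran = y.ran) :
    GIS.mk x y h = el n x.edges y.edges := by
  obtain ⟨sx, lx, cx⟩ := x; obtain ⟨sy, ly, cy⟩ := y; cases sx; cases sy; rfl

theorem mk_eq' {n : ℕ} (x y : GPath (polyGraph n)) (h : x.ran = y.ran) :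
    ∃ X Y : List (Fin n), GIS.mk x y h = el n X Y := ⟨_, _, mk_eq x y h⟩

theorem el_inj {n : ℕ} {x y p q : List (Fin n)} (h : el n x y = el n p q) :
    x = p ∧ y = q := by
  injection h with h1 h2
  exact ⟨congrArg GPath.edges h1, congrArg GPath.edges h2⟩

theorem isPrefix_iff {n : ℕ} (x p : List (Fin n)) :
    (pth n x).IsPrefixOf (pth n p) ↔ x <+: p :=
  ⟨fun h => h.2, fun h => ⟨rfl, h⟩⟩

theorem el_mul_of_prefix {n : ℕ} {y p : List (Fin n)} (x q : List (Fin n))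
    (h : y <+: p) :
    el n x y * el n p q = el n (x ++ p.drop y.length) q := by
  show GIS.gmul (GIS.mk (pth n x) (pth n y) _) (GIS.mk (pth n p) (pth n q) _) = _
  simp only [GIS.gmul]
  rw [dif_pos ((isPrefix_iff y p).mpr h)]
  rw [mk_eq]; rfl

theorem el_mul_of_prefix' {n : ℕ} {y p : List (Fin n)} (x q : List (Fin n))
    (h1 : ¬ y <+: p) (h : p <+: y) :
    el n x y * el n p q = el n x (q ++ y.drop p.length) := by
  show GIS.gmul (GIS.mk (pth n x) (pth n y) _) (GIS.mk (pth n p) (pth n q) _) = _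
  simp only [GIS.gmul]
  rw [dif_neg (fun hc => h1 ((isPrefix_iff y p).mp hc)),
    dif_pos ((isPrefix_iff p y).mpr h)]
  rw [mk_eq]; rfl

theorem el_mul_of_not {n : ℕ} {y p : List (Fin n)} (x q : List (Fin n))
    (h1 : ¬ y <+: p) (h2 : ¬ p <+: y) :
    el n x y * el n p q = 0 := by
  show GIS.gmul (GIS.mk (pth n x) (pth n y) _) (GIS.mk (pth n p) (pth n q) _) = _
  simp only [GIS.gmul]
  rw [dif_neg (fun hc => h1 ((isPrefix_iff y p).mp hc)),
    dif_neg (fun hc => h2 ((isPrefix_iff p y).mp hc))]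
  rfl

theorem zero_mul' {n : ℕ} (a : GIS (polyGraph n)) : 0 * a = 0 := rfl

theorem mul_zero' {n : ℕ} (a : GIS (polyGraph n)) : a * 0 = 0 := by
  cases a <;> rfl

theorem mul_one' {n : ℕ} (a : GIS (polyGraph n)) : a * el n [] [] = a := by
  cases a with
  | zero => rfl
  | mk x y h =>
    obtain ⟨X, Y, hXY⟩ := mk_eq' x y h
    rw [hXY]
    by_cases hy : Y = []
    · rw [el_mul_of_prefix (y := Y) (p := []) _ _ (by rw [hy])]
      simp [hy]
    · rw [el_mul_of_prefix' (y := Y) (p := []) _ _ (by simp [List.prefix_nil, hy]) (List.nil_prefix)]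
      simp

theorem one_mul' {n : ℕ} (a : GIS (polyGraph n)) : el n [] [] * a = a := by
  cases a with
  | zero => exact mul_zero' _
  | mk x y h =>
    obtain ⟨X, Y, hXY⟩ := mk_eq' x y h
    rw [hXY, el_mul_of_prefix _ _ (List.nil_prefix)]
    simp

theorem elx_mul {n : ℕ} (x y : List (Fin n)) :
    el n [] x * el n x y = el n [] y := by
  rw [el_mul_of_prefix _ _ (List.prefix_refl x)]
  simp

end PolyAux

namespace PolyAux

/-- The index map on `P₁`. -/
noncomputable def idx : GIS (polyGraph 1) → Option ℤ
  | GIS.zero => none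
  | GIS.mk x y _ => some ((x.edges.length : ℤ) - y.edges.length)

theorem idx_el (x y : List (Fin 1)) :
    idx (el 1 x y) = some ((x.length : ℤ) - y.length) := rfl

theorem fin1_eq_replicate (l : List (Fin 1)) : l = List.replicate l.length 0 := by
  induction l with
  | nil => rfl
  | cons a l ih =>
    simp only [List.length_cons, List.replicate_succ]
    rw [Subsingleton.elim a 0, ← ih]

theorem fin1_prefix_total (l1 l2 : List (Fin 1)) : l1 <+: l2 ∨ l2 <+: l1 := by
  have key : ∀ a b : List (Fin 1), a.length ≤ b.length → a <+: b := by
    intro a b h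
    rw [fin1_eq_replicate a, fin1_eq_replicate b]
    refine ⟨List.replicate (b.length - a.length) 0, ?_⟩
    rw [← List.replicate_add, Nat.add_sub_cancel' h]
  rcases le_total l1.length l2.length with h | h
  · exact Or.inl (key _ _ h)
  · exact Or.inr (key _ _ h)

theorem idx_mul (a b : GIS (polyGraph 1)) :
    idx (a * b) = Option.map₂ (· + ·) (idx a) (idx b) := by
  cases a with
  | zero => rfl
  | mk x y hxy =>
    cases b with
    | zero => rw [show GIS.zero = (0 : GIS (polyGraph 1)) from rfl, mul_zero']; rfl
    | mk p q hpq =>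
      obtain ⟨X, Y, hXY⟩ := mk_eq' x y hxy
      obtain ⟨P, Q, hPQ⟩ := mk_eq' p q hpq
      rw [hXY, hPQ]
      by_cases h1 : Y <+: P
      · rw [el_mul_of_prefix _ _ h1, idx_el, idx_el, idx_el]
        have hle := h1.length_le
        simp only [Option.map₂, Option.bind, Option.map]
        congr 1
        rw [List.length_append, List.length_drop]
        push_cast [Nat.cast_sub hle]
        ring
      · have h2 : P <+: Y := (fin1_prefix_total _ _).resolve_left h1
        rw [el_mul_of_prefix' _ _ h1 h2, idx_el, idx_el, idx_el]
        have hle := h2.length_le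
        simp only [Option.map₂, Option.bind, Option.map]
        congr 1
        rw [List.length_append, List.length_drop]
        push_cast [Nat.cast_sub hle]
        ring

/-- A nontrivial, non-universal congruence on `P₁`. -/
noncomputable def con1 : Con (GIS (polyGraph 1)) where
  r a b := idx a = idx b
  iseqv := ⟨fun _ => rfl, Eq.symm, Eq.trans⟩
  mul' h1 h2 := by simp only [idx_mul]; rw [show idx _ = idx _ from h1, show idx _ = idx _ from h2]

theorem not_congFree_one : ¬ CongFree (polyGraph 1) := by
  intro h
  rcases h con1 with h | h
  · have := h 0 (el 1 [] [])
    simp only [con1, Con.rel_mk] at this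
    change (none : Option ℤ) = _ at this; simp [idx_el] at this
  · have h2 : con1 (el 1 [0] []) (el 1 [0, 0] [0]) := by
      show idx _ = idx _
      rw [idx_el, idx_el]
      norm_num
    rw [h] at h2
    have := (el_inj h2).1
    simp at this

end PolyAux

namespace PolyAux

variable {n : ℕ}

theorem key0 {R : Con (GIS (polyGraph n))} (h : R 0 (el n [] [])) :
    ∀ a b : GIS (polyGraph n), R a b := by
  have hs : ∀ s : GIS (polyGraph n), R 0 s := by
    intro s
    have h2 := R.mul (R.refl s) h
    rwa [mul_zero', mul_one'] at h2
  exact fun a b => R.trans (R.symm (hs a)) (hs b)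

theorem keyEl {R : Con (GIS (polyGraph n))} {x y : List (Fin n)}
    (h : R 0 (el n x y)) : ∀ a b : GIS (polyGraph n), R a b := by
  apply key0 (R := R)
  have h2 := R.mul (R.mul (R.refl (el n [] x)) h) (R.refl (el n y []))
  rwa [mul_zero', zero_mul', elx_mul, elx_mul] at h2

theorem exists_ne' (hn : 1 < n) (e : Fin n) : ∃ g : Fin n, g ≠ e := by
  haveI : Nontrivial (Fin n) := Fin.nontrivial_iff_two_le.mpr hn
  exact exists_ne e

theorem lemNe (hn : 1 < n) {R : Con (GIS (polyGraph n))} {u v : List (Fin n)}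
    (hne : u ≠ [] ∨ v ≠ []) (h : R (el n u v) (el n [] [])) :
    ∀ a b : GIS (polyGraph n), R a b := by
  cases u with
  | cons e u' =>
    obtain ⟨g, hg⟩ := exists_ne' hn e
    have h2 := R.mul (R.refl (el n [] [g])) h
    rw [mul_one', el_mul_of_not _ _
        (fun hc => hg (List.cons_prefix_cons.mp hc).1)
        (fun hc => hg (List.cons_prefix_cons.mp hc).1.symm)] at h2
    exact keyEl h2
  | nil =>
    cases v with
    | nil => simp at hne
    | cons e v' =>
      obtain ⟨g, hg⟩ := exists_ne' hn e
      have h2 := R.mul h (R.refl (el n [g] []))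
      rw [one_mul', el_mul_of_not _ _
          (fun hc => hg (List.cons_prefix_cons.mp hc).1.symm)
          (fun hc => hg (List.cons_prefix_cons.mp hc).1)] at h2
      exact keyEl h2

theorem doA (hn : 1 < n) {R : Con (GIS (polyGraph n))} {X Y P Q s : List (Fin n)}
    (hs : s ≠ []) (hX : X = P ++ s) (hY : Y = Q ++ s)
    (hR : R (el n X Y) (el n P Q)) : ∀ a b : GIS (polyGraph n), R a b := by
  have h1 := R.mul (R.mul (R.refl (el n [] P)) hR) (R.refl (el n Q []))
  rw [elx_mul, elx_mul] at h1
  rw [el_mul_of_prefix _ _ (⟨s, hX.symm⟩ : P <+: X)] at h1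
  have hdrop : ([] : List (Fin n)) ++ X.drop P.length = s := by
    rw [hX, List.drop_left]; rfl
  rw [hdrop] at h1
  have hnYQ : ¬ Y <+: Q := by
    intro hc
    have hlen := hc.length_le
    rw [hY, List.length_append] at hlen
    exact hs (List.length_eq_zero_iff.mp (by omega))
  rw [el_mul_of_prefix' _ _ hnYQ (⟨s, hY.symm⟩ : Q <+: Y)] at h1
  have hdrop2 : ([] : List (Fin n)) ++ Y.drop Q.length = s := by
    rw [hY, List.drop_left]; rfl
  rw [hdrop2] at h1
  exact lemNe hn (Or.inl hs) h1

theorem congFree_of_lt (hn : 1 < n) : CongFree (polyGraph n) := by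
  intro R
  by_cases hdiag : ∀ a b : GIS (polyGraph n), R a b ↔ a = b
  · exact Or.inr hdiag
  left
  push_neg at hdiag
  obtain ⟨a, b, hab⟩ := hdiag
  obtain ⟨hR, hneq⟩ | ⟨hnR, rfl⟩ := hab
  swap
  · exact absurd (R.refl a) hnR
  cases a with
  | zero =>
    cases b with
    | zero => exact absurd rfl hneq
    | mk p q h => rw [mk_eq] at hR; exact keyEl hR
  | mk x0 y0 hxy =>
    cases b with
    | zero => rw [mk_eq] at hR; exact keyEl (R.symm hR)
    | mk p0 q0 hpq =>
      rw [mk_eq x0 y0, mk_eq p0 q0] at hR hneq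
      set X : List (Fin n) := x0.edges with hXdef
      set Y : List (Fin n) := y0.edges with hYdef
      set P : List (Fin n) := p0.edges with hPdef
      set Q : List (Fin n) := q0.edges with hQdef
      have hXY : ¬(X = P ∧ Y = Q) := by
        rintro ⟨h1, h2⟩; exact hneq (by rw [h1, h2])
      by_cases hA : ∃ s : List (Fin n), s ≠ [] ∧ X = P ++ s ∧ Y = Q ++ s
      · obtain ⟨s, hs, h1, h2⟩ := hA; exact doA hn hs h1 h2 hR
      by_cases hB : ∃ s : List (Fin n), s ≠ [] ∧ P = X ++ s ∧ Q = Y ++ s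
      · obtain ⟨s, hs, h1, h2⟩ := hB; exact doA hn hs h1 h2 (R.symm hR)
      have h1 := R.mul (R.mul (R.refl (el n [] X)) hR) (R.refl (el n Y []))
      rw [elx_mul, elx_mul] at h1
      by_cases hc1 : X <+: P
      · rw [el_mul_of_prefix _ _ hc1, List.nil_append] at h1
        by_cases hc2 : Q <+: Y
        · rw [el_mul_of_prefix _ _ hc2] at h1
          by_cases hu : P.drop X.length ++ Y.drop Q.length = []
          · exfalso
            rw [List.append_eq_nil_iff] at hu
            exact hXY ⟨hc1.eq_of_length_le (List.drop_eq_nil_iff.mp hu.1),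
              (hc2.eq_of_length_le (List.drop_eq_nil_iff.mp hu.2)).symm⟩
          · exact lemNe hn (Or.inl hu) (R.symm h1)
        · by_cases hc3 : Y <+: Q
          · rw [el_mul_of_prefix' _ _ hc2 hc3, List.nil_append] at h1
            by_cases hv : Q.drop Y.length = []
            · exfalso
              by_cases hu : P.drop X.length = []
              · exact hXY ⟨hc1.eq_of_length_le (List.drop_eq_nil_iff.mp hu),
                  hc3.eq_of_length_le (List.drop_eq_nil_iff.mp hv)⟩
              · exact hu (by
                  exact absurd (hc3.eq_of_length_le (List.drop_eq_nil_iff.mp hv)) (by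
                    intro hyq
                    exact hc2 (hyq ▸ List.prefix_refl Q)))
            · exact lemNe hn (Or.inr hv) (R.symm h1)
          · rw [el_mul_of_not _ _ hc2 hc3] at h1
            exact key0 (R.symm h1)
      · by_cases hc1' : P <+: X
        · obtain ⟨s, hsX⟩ := hc1'
          have hsdrop : X.drop P.length = s := by rw [← hsX, List.drop_left]
          have hsne : s ≠ [] := by
            rintro rfl
            exact hc1 (by rw [← hsX, List.append_nil])
          rw [el_mul_of_prefix' _ _ hc1 ⟨s, hsX⟩, hsdrop] at h1
          by_cases hc2 : (Q ++ s) <+: Y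
          · rw [el_mul_of_prefix _ _ hc2, List.nil_append] at h1
            by_cases hu : Y.drop (Q ++ s).length = []
            · exact absurd ⟨s, hsne, hsX.symm,
                (hc2.eq_of_length_le (List.drop_eq_nil_iff.mp hu)).symm⟩ hA
            · exact lemNe hn (Or.inl hu) (R.symm h1)
          · by_cases hc3 : Y <+: (Q ++ s)
            · rw [el_mul_of_prefix' _ _ hc2 hc3, List.nil_append] at h1
              by_cases hv : (Q ++ s).drop Y.length = []
              · exact absurd ⟨s, hsne, hsX.symm,
                  hc3.eq_of_length_le (List.drop_eq_nil_iff.mp hv)⟩ hA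
              · exact lemNe hn (Or.inr hv) (R.symm h1)
            · rw [el_mul_of_not _ _ hc2 hc3] at h1
              exact key0 (R.symm h1)
        · rw [el_mul_of_not _ _ hc1 hc1', zero_mul'] at h1
          exact key0 (R.symm h1)

end PolyAux


/-- The polycyclic monoid `Pₙ` (`n ≥ 1`) is congruence-free iff
`n > 1`. -/
theorem stmt16 (n : ℕ) (hn : 1 ≤ n) : CongFree (polyGraph n) ↔ 1 < n := by
  constructor
  · intro h
    by_contra hlt
    have hne : n = 1 := by omega
    subst hne
    exact PolyAux.not_congFree_one h
  · exact fun h => PolyAux.congFree_of_lt h
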